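/- Under Assumption (K) on the kernel k, the recursively defined coefficients c_n satisfy, for every T>0, every n∈ℕ with n≥1 and every t∈[0,T], the bound |c_n(t)| ≤ K_T^n T^{n(1−α*)} ∏_{l=1}^{n−1} (l(1−α*)(1+1/ε)+1)^{−ε/(1+ε)}; in particular all the integrals defining c_n exist and are finite. -/

import Mathlib

open MeasureTheory Filter

noncomputable section

noncomputable def coeff (k : ℝ → ℝ → ℝ) : ℕ → ℝ → ℝ
  | 0, _ => 1
  | n + 1, t => if 0 < t then ∫ s in Set.Ioc (0:ℝ) t, k t s * coeff k n s else 0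

noncomputable def Phi (k : ℝ → ℝ → ℝ) (t : ℝ) (l : ℂ) : ℂ :=
  ∑' n : ℕ, (coeff k n t : ℂ) * l ^ n

noncomputable def PhiR (k : ℝ → ℝ → ℝ) (t : ℝ) (x : ℝ) : ℝ :=
  ∑' n : ℕ, coeff k n t * x ^ n

lemma coeff_measurable (k : ℝ → ℝ → ℝ) (hkm : Measurable (Function.uncurry k)) :
    ∀ n, Measurable (coeff k n) := by
  intro n
  induction n with
  | zero => simpa [coeff] using measurable_const
  | succ n ih =>
    have hF : Measurable (fun p : ℝ × ℝ =>
        (Set.Ioc (0:ℝ) p.1).indicator (fun s => k p.1 s * coeff k n s) p.2) := by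
      have heq : (fun p : ℝ × ℝ =>
          (Set.Ioc (0:ℝ) p.1).indicator (fun s => k p.1 s * coeff k n s) p.2)
          = Set.indicator {q : ℝ × ℝ | 0 < q.2 ∧ q.2 ≤ q.1}
              (fun q => k q.1 q.2 * coeff k n q.2) := by
        funext p
        by_cases h : 0 < p.2 ∧ p.2 ≤ p.1
        · simp [Set.indicator_apply, Set.mem_Ioc, h]
        · simp [Set.indicator_apply, Set.mem_Ioc, h]
      rw [heq]
      refine Measurable.indicator ?_ ?_
      · exact hkm.mul (ih.comp measurable_snd)
      · exact (measurableSet_lt measurable_const measurable_snd).inter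
          (measurableSet_le measurable_snd measurable_fst)
    have hI : Measurable fun t : ℝ =>
        ∫ s, (Set.Ioc (0:ℝ) t).indicator (fun s => k t s * coeff k n s) s := by
      exact (hF.stronglyMeasurable.integral_prod_right').measurable
    have heq2 : coeff k (n+1) = fun t : ℝ =>
        if 0 < t then ∫ s, (Set.Ioc (0:ℝ) t).indicator (fun s => k t s * coeff k n s) s
        else 0 := by
      funext t
      simp only [coeff]
      split_ifs with h
      · rw [integral_indicator measurableSet_Ioc]
      · rfl
    rw [heq2]
    exact Measurable.ite (measurableSet_lt measurable_const measurable_id) hI measurable_const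

theorem stmt5 (k : ℝ → ℝ → ℝ) (hkm : Measurable (Function.uncurry k))
    (α ε : ℝ) (hα0 : 0 ≤ α) (hα1 : α < 1) (hε : 0 < ε)
    (T : ℝ) (hT : 0 < T) (KT : ℝ) (hKT0 : 0 ≤ KT)
    (hK : ∀ t : ℝ, 0 < t → t ≤ T →
      MeasureTheory.IntegrableOn (fun s => |k t s| ^ (1 + ε)) (Set.Ioc 0 t) ∧
      t ^ (α - 1 / (1 + ε)) *
        (∫ s in Set.Ioc (0:ℝ) t, |k t s| ^ (1 + ε)) ^ (1 / (1 + ε)) ≤ KT) :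
    ∀ n : ℕ,
      (∀ t : ℝ, 0 < t → t ≤ T →
        MeasureTheory.IntegrableOn (fun s => k t s * coeff k n s) (Set.Ioc 0 t)) ∧
      (∀ t ∈ Set.Icc (0:ℝ) T,
        |coeff k (n + 1) t| ≤ KT ^ (n + 1) * T ^ (((n : ℝ) + 1) * (1 - α)) *
          ∏ l ∈ Finset.Icc 1 n,
            ((l : ℝ) * (1 - α) * (1 + 1 / ε) + 1) ^ (-(ε / (1 + ε)))) := by
  have hεp : (0:ℝ) < 1 + ε := by linarith
  have hεn : (ε:ℝ) ≠ 0 := hε.ne'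
  have hεpn : (1+ε:ℝ) ≠ 0 := hεp.ne'
  have hα : (0:ℝ) < 1 - α := by linarith
  -- conjugate exponents
  have hpq : (1+ε).HolderConjugate ((1+ε)/ε) := by
    rw [Real.holderConjugate_iff_eq_conjExponent (by linarith)]
    congr 1; ring
  set P : ENNReal := ENNReal.ofReal (1+ε) with hP
  have hP0 : P ≠ 0 := by simp [hP, ENNReal.ofReal_eq_zero]; linarith
  have hPt : P ≠ ⊤ := ENNReal.ofReal_ne_top
  have hP1 : 1 ≤ P := by
    rw [hP, ← ENNReal.ofReal_one]
    exact ENNReal.ofReal_le_ofReal (by linarith)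
  have hPr : P.toReal = 1 + ε := ENNReal.toReal_ofReal hεp.le
  have hkmt : ∀ t : ℝ, Measurable (k t) := fun t => hkm.comp measurable_prodMk_left
  have hcm := coeff_measurable k hkm
  -- finite measure instances
  have hfin : ∀ t : ℝ, IsFiniteMeasure (volume.restrict (Set.Ioc (0:ℝ) t)) := by
    intro t
    constructor
    rw [Measure.restrict_apply_univ]
    exact measure_Ioc_lt_top
  -- k t ∈ L^{1+ε}
  have hmem : ∀ t : ℝ, 0 < t → t ≤ T →
      MemLp (k t) P (volume.restrict (Set.Ioc (0:ℝ) t)) := by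
    intro t ht htT
    have h1 : MemLp (fun s => ‖k t s‖ ^ P.toReal) (P / P)
        (volume.restrict (Set.Ioc (0:ℝ) t)) := by
      rw [ENNReal.div_self hP0 hPt, memLp_one_iff_integrable]
      have := (hK t ht htT).1
      simp only [hPr, Real.norm_eq_abs]; exact this
    exact (memLp_norm_rpow_iff ((hkmt t).aestronglyMeasurable) hP0 hPt).mp h1
  have hkInt : ∀ t : ℝ, 0 < t → t ≤ T → IntegrableOn (k t) (Set.Ioc (0:ℝ) t) := by
    intro t ht htT
    haveI := hfin t
    exact (hmem t ht htT).integrable hP1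
  -- the constants
  set Dt : ℕ → ℝ := fun l => ((l : ℝ) * (1 - α) * (1 + 1 / ε) + 1) ^ (-(ε / (1 + ε))) with hDt
  have hDpos : ∀ l : ℕ, 0 < Dt l := by
    intro l
    apply Real.rpow_pos_of_pos
    have : 0 ≤ (l:ℝ) * (1 - α) * (1 + 1/ε) := by
      apply mul_nonneg (mul_nonneg (Nat.cast_nonneg l) hα.le)
      positivity
    linarith
  set C : ℕ → ℝ := fun m => KT ^ m * ∏ l ∈ Finset.Icc 1 (m-1), Dt l with hC
  have hC0 : ∀ m, 0 ≤ C m := by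
    intro m
    apply mul_nonneg (pow_nonneg hKT0 m)
    exact Finset.prod_nonneg fun l _ => (hDpos l).le
  have hCrec : ∀ n : ℕ, C (n+1) = C n * (KT * Dt n) := by
    intro n
    cases n with
    | zero =>
      have hD0 : Dt 0 = 1 := by
        simp [hDt]
      simp [hC, hD0, Finset.Icc_eq_empty (by omega : ¬ (1:ℕ) ≤ 0)]
    | succ m =>
      simp only [hC, Nat.add_sub_cancel]
      rw [Finset.prod_Icc_succ_top (by omega : 1 ≤ m + 1)]
      ring
  -- main inductive bound
  have Q : ∀ n : ℕ, ∀ t : ℝ, 0 < t → t ≤ T →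
      |coeff k n t| ≤ C n * t ^ ((n:ℝ) * (1 - α)) := by
    intro n
    induction n with
    | zero =>
      intro t ht htT
      simp [coeff, hC, Finset.Icc_eq_empty (by omega : ¬ (1:ℕ) ≤ 0 - 1)]
    | succ n ih =>
      -- first, integrability of the integrand
      intro t ht htT
      set β : ℝ := (n:ℝ) * (1 - α) with hβ
      have hβ0 : 0 ≤ β := by
        apply mul_nonneg (Nat.cast_nonneg n) hα.le
      set γ : ℝ := β * ((1+ε)/ε) with hγ
      have hγ0 : 0 ≤ γ := by
        apply mul_nonneg hβ0
        positivity
      haveI := hfin t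
      have hbd : ∀ s : ℝ, 0 < s → s ≤ t → |coeff k n s| ≤ C n * T ^ β := by
        intro s hs hst
        refine (ih s hs (hst.trans htT)).trans ?_
        exact mul_le_mul_of_nonneg_left
          (Real.rpow_le_rpow hs.le (hst.trans htT) hβ0) (hC0 n)
      have hprod : IntegrableOn (fun s => k t s * coeff k n s) (Set.Ioc (0:ℝ) t) := by
        refine Integrable.mono' (((hkInt t ht htT).abs).const_mul (C n * T ^ β))
          (((hkmt t).mul (hcm n)).aestronglyMeasurable) ?_
        filter_upwards [ae_restrict_mem measurableSet_Ioc] with s hs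
        rw [Real.norm_eq_abs, abs_mul]
        calc |k t s| * |coeff k n s| ≤ |k t s| * (C n * T ^ β) :=
              mul_le_mul_of_nonneg_left (hbd s hs.1 hs.2) (abs_nonneg _)
          _ = C n * T ^ β * |k t s| := by ring
      -- Hölder's inequality
      have hgmem : MemLp (fun s : ℝ => s ^ β) (ENNReal.ofReal ((1+ε)/ε))
          (volume.restrict (Set.Ioc (0:ℝ) t)) := by
        refine MemLp.mono_exponent (q := ⊤) ?_ le_top
        refine memLp_top_of_bound (by fun_prop) (T ^ β) ?_
        filter_upwards [ae_restrict_mem measurableSet_Ioc] with s hs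
        rw [Real.norm_eq_abs, abs_of_nonneg (Real.rpow_nonneg hs.1.le β)]
        exact Real.rpow_le_rpow hs.1.le (hs.2.trans htT) hβ0
      have hfmem : MemLp (fun s : ℝ => |k t s|) P
          (volume.restrict (Set.Ioc (0:ℝ) t)) := by
        simpa [Real.norm_eq_abs] using (hmem t ht htT).norm
      have hH := integral_mul_le_Lp_mul_Lq_of_nonneg
        (μ := volume.restrict (Set.Ioc (0:ℝ) t)) hpq
        (Eventually.of_forall fun s => abs_nonneg (k t s))
        (by
          filter_upwards [ae_restrict_mem measurableSet_Ioc] with s hs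
          exact Real.rpow_nonneg hs.1.le β)
        hfmem hgmem
      -- the integral of s^(β*q)
      have hpow : ∫ s in Set.Ioc (0:ℝ) t, (s ^ β) ^ ((1+ε)/ε)
          = t ^ (γ+1) / (γ+1) := by
        have h1 : ∫ s in Set.Ioc (0:ℝ) t, (s ^ β) ^ ((1+ε)/ε)
            = ∫ s in Set.Ioc (0:ℝ) t, s ^ γ := by
          refine setIntegral_congr_fun measurableSet_Ioc fun s hs => ?_
          exact (Real.rpow_mul hs.1.le β ((1+ε)/ε)).symm
        rw [h1, ← intervalIntegral.integral_of_le ht.le,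
          integral_rpow (Or.inl (by linarith : (-1:ℝ) < γ))]
        rw [Real.zero_rpow (by linarith : γ + 1 ≠ 0)]
        ring
      -- bound for the L^{1+ε} factor
      have hA0 : 0 ≤ (∫ s in Set.Ioc (0:ℝ) t, |k t s| ^ (1+ε)) ^ (1/(1+ε)) :=
        Real.rpow_nonneg
          (integral_nonneg fun s => Real.rpow_nonneg (abs_nonneg _) _) _
      have hAle : (∫ s in Set.Ioc (0:ℝ) t, |k t s| ^ (1+ε)) ^ (1/(1+ε))
          ≤ KT * t ^ (1/(1+ε) - α) := by
        have h2 := (hK t ht htT).2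
        have h3 : t ^ (1/(1+ε) - α) * (t ^ (α - 1/(1+ε)) *
            (∫ s in Set.Ioc (0:ℝ) t, |k t s| ^ (1+ε)) ^ (1/(1+ε)))
            ≤ t ^ (1/(1+ε) - α) * KT :=
          mul_le_mul_of_nonneg_left h2 (Real.rpow_nonneg ht.le _)
        calc (∫ s in Set.Ioc (0:ℝ) t, |k t s| ^ (1+ε)) ^ (1/(1+ε))
            = t ^ (1/(1+ε) - α) * (t ^ (α - 1/(1+ε)) *
              (∫ s in Set.Ioc (0:ℝ) t, |k t s| ^ (1+ε)) ^ (1/(1+ε))) := by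
              rw [← mul_assoc, ← Real.rpow_add ht]
              simp
          _ ≤ t ^ (1/(1+ε) - α) * KT := h3
          _ = KT * t ^ (1/(1+ε) - α) := mul_comm _ _
      -- the second Hölder factor in closed form
      have hbase : (0:ℝ) ≤ (n:ℝ) * (1 - α) * (1 + 1/ε) + 1 := by
        have : 0 ≤ (n:ℝ) * (1 - α) * (1 + 1/ε) := by
          apply mul_nonneg (mul_nonneg (Nat.cast_nonneg n) hα.le)
          positivity
        linarith
      have hB : (∫ s in Set.Ioc (0:ℝ) t, (s ^ β) ^ ((1+ε)/ε)) ^ (1/((1+ε)/ε))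
          = t ^ (β + ε/(1+ε)) * Dt n := by
        rw [hpow, one_div_div,
          Real.div_rpow (Real.rpow_nonneg ht.le _) (by linarith : (0:ℝ) ≤ γ + 1),
          ← Real.rpow_mul ht.le]
        have he : (γ+1) * (ε/(1+ε)) = β + ε/(1+ε) := by
          rw [hγ]; field_simp
        have h4 : (1+ε)/ε = 1 + 1/ε := by field_simp; ring
        have hg2 : (γ + 1 : ℝ) = (n:ℝ) * (1 - α) * (1 + 1/ε) + 1 := by
          rw [hγ, hβ, h4]
        rw [he, hg2, div_eq_mul_inv, ← Real.rpow_neg hbase]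
      -- assemble
      have e1 : coeff k (n+1) t = ∫ s in Set.Ioc (0:ℝ) t, k t s * coeff k n s := by
        simp [coeff, if_pos ht]
      have hDn0 : 0 ≤ t ^ (β + ε/(1+ε)) * Dt n :=
        mul_nonneg (Real.rpow_nonneg ht.le _) (hDpos n).le
      have hexp : t ^ (1/(1+ε) - α) * t ^ (β + ε/(1+ε))
          = t ^ (((n:ℝ) + 1) * (1 - α)) := by
        rw [← Real.rpow_add ht]
        congr 1
        rw [hβ]; field_simp; ring
      have hcast : ((n + 1 : ℕ) : ℝ) * (1 - α) = ((n:ℝ) + 1) * (1 - α) := by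
        push_cast; ring
      rw [hcast]
      calc |coeff k (n+1) t|
          = |∫ s in Set.Ioc (0:ℝ) t, k t s * coeff k n s| := by rw [e1]
        _ ≤ ∫ s in Set.Ioc (0:ℝ) t, |k t s| * |coeff k n s| := by
            simpa [Real.norm_eq_abs, abs_mul] using
              norm_integral_le_integral_norm
                (μ := volume.restrict (Set.Ioc (0:ℝ) t))
                (fun s => k t s * coeff k n s)
        _ ≤ ∫ s in Set.Ioc (0:ℝ) t, C n * (|k t s| * s ^ β) := by
            refine integral_mono_ae
              (hprod.abs.congr (Eventually.of_forall fun s => abs_mul _ _)) ?_ ?_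
            · refine Integrable.mono'
                (((hkInt t ht htT).abs).const_mul (C n * T ^ β))
                ((measurable_const.mul ((hkmt t).abs.mul
                  (by fun_prop : Measurable fun s : ℝ => s ^ β))).aestronglyMeasurable) ?_
              filter_upwards [ae_restrict_mem measurableSet_Ioc] with s hs
              have h0 : (0:ℝ) ≤ C n * (|k t s| * s ^ β) :=
                mul_nonneg (hC0 n)
                  (mul_nonneg (abs_nonneg _) (Real.rpow_nonneg hs.1.le _))
              rw [Real.norm_eq_abs, abs_of_nonneg h0]
              calc C n * (|k t s| * s ^ β)
                  ≤ C n * (|k t s| * T ^ β) := by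
                    refine mul_le_mul_of_nonneg_left
                      (mul_le_mul_of_nonneg_left
                        (Real.rpow_le_rpow hs.1.le (hs.2.trans htT) hβ0)
                        (abs_nonneg _)) (hC0 n)
                _ = C n * T ^ β * |k t s| := by ring
            · filter_upwards [ae_restrict_mem measurableSet_Ioc] with s hs
              calc |k t s| * |coeff k n s|
                  ≤ |k t s| * (C n * s ^ β) :=
                    mul_le_mul_of_nonneg_left
                      (ih s hs.1 (hs.2.trans htT)) (abs_nonneg _)
                _ = C n * (|k t s| * s ^ β) := by ring
        _ = C n * ∫ s in Set.Ioc (0:ℝ) t, |k t s| * s ^ β := by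
            rw [integral_const_mul]
        _ ≤ C n * ((∫ s in Set.Ioc (0:ℝ) t, |k t s| ^ (1+ε)) ^ (1/(1+ε)) *
              (∫ s in Set.Ioc (0:ℝ) t, (s ^ β) ^ ((1+ε)/ε)) ^ (1/((1+ε)/ε))) :=
            mul_le_mul_of_nonneg_left hH (hC0 n)
        _ = C n * ((∫ s in Set.Ioc (0:ℝ) t, |k t s| ^ (1+ε)) ^ (1/(1+ε)) *
              (t ^ (β + ε/(1+ε)) * Dt n)) := by rw [hB]
        _ ≤ C n * ((KT * t ^ (1/(1+ε) - α)) * (t ^ (β + ε/(1+ε)) * Dt n)) :=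
            mul_le_mul_of_nonneg_left
              (mul_le_mul_of_nonneg_right hAle hDn0) (hC0 n)
        _ = (C n * (KT * Dt n)) *
              (t ^ (1/(1+ε) - α) * t ^ (β + ε/(1+ε))) := by ring
        _ = C (n+1) * t ^ (((n:ℝ) + 1) * (1 - α)) := by
            rw [hexp, ← hCrec n]
  -- conclude
  intro n
  constructor
  · intro t ht htT
    haveI := hfin t
    have hbd : ∀ s : ℝ, 0 < s → s ≤ t → |coeff k n s|
        ≤ C n * T ^ ((n:ℝ) * (1 - α)) := by
      intro s hs hst
      refine (Q n s hs (hst.trans htT)).trans ?_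
      refine mul_le_mul_of_nonneg_left
        (Real.rpow_le_rpow hs.le (hst.trans htT) ?_) (hC0 n)
      exact mul_nonneg (Nat.cast_nonneg n) hα.le
    refine Integrable.mono'
      (((hkInt t ht htT).abs).const_mul (C n * T ^ ((n:ℝ) * (1 - α))))
      (((hkmt t).mul (hcm n)).aestronglyMeasurable) ?_
    filter_upwards [ae_restrict_mem measurableSet_Ioc] with s hs
    rw [Real.norm_eq_abs, abs_mul]
    calc |k t s| * |coeff k n s|
        ≤ |k t s| * (C n * T ^ ((n:ℝ) * (1 - α))) :=
          mul_le_mul_of_nonneg_left (hbd s hs.1 hs.2) (abs_nonneg _)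
      _ = C n * T ^ ((n:ℝ) * (1 - α)) * |k t s| := by ring
  · rintro t ⟨ht0, htT⟩
    rcases eq_or_lt_of_le ht0 with h0 | h0
    · have : coeff k (n+1) t = 0 := by
        rw [← h0]; simp [coeff]
      rw [this, abs_zero]
      refine mul_nonneg (mul_nonneg (pow_nonneg hKT0 _)
        (Real.rpow_nonneg hT.le _)) (Finset.prod_nonneg fun l _ => ?_)
      exact (hDpos l).le
    · have hQ := Q (n+1) t h0 htT
      have hle : C (n+1) * t ^ (((n+1:ℕ):ℝ) * (1 - α))
          ≤ C (n+1) * T ^ (((n+1:ℕ):ℝ) * (1 - α)) := by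
        refine mul_le_mul_of_nonneg_left
          (Real.rpow_le_rpow h0.le htT ?_) (hC0 (n+1))
        exact mul_nonneg (Nat.cast_nonneg _) hα.le
      have hfin2 : C (n+1) * T ^ (((n+1:ℕ):ℝ) * (1 - α))
          = KT ^ (n + 1) * T ^ (((n : ℝ) + 1) * (1 - α)) *
            ∏ l ∈ Finset.Icc 1 n, ((l : ℝ) * (1 - α) * (1 + 1 / ε) + 1)
              ^ (-(ε / (1 + ε))) := by
        simp only [hC, Nat.add_sub_cancel, hDt]
        push_cast
        ring
      rw [← hfin2]
      exact hQ.trans hle
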